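/- Let P₀, …, Pₙ, with Pₙ₊₁ := P₀, be the vertices of a closed PL curve in ℝ³ with consecutive vertices distinct, and for each m (indices mod n+1) let αₘ ∈ [0,π] be the exterior angle at Pₘ. If the closed curve is nondegenerate (not contained in a single line traversed back and forth), then Σₘ αₘ ≥ 2π. -/

import Mathlib

open InnerProductGeometry Real RealInnerProductSpace

namespace Fenchel

variable {V : Type*} [NormedAddCommGroup V] [InnerProductSpace ℝ V]


variable {V : Type*} [NormedAddCommGroup V] [InnerProductSpace ℝ V]

theorem angle_triangle_unit {x y z : V} (hx : ‖x‖ = 1) (hy : ‖y‖ = 1) (hz : ‖z‖ = 1) :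
    angle x z ≤ angle x y + angle y z := by
  by_cases hsum : π ≤ angle x y + angle y z
  · linarith [angle_le_pi x z]
  push_neg at hsum
  set a : ℝ := ⟪x, y⟫ with ha
  set b : ℝ := ⟪y, z⟫ with hb
  set c : ℝ := ⟪x, z⟫ with hc
  have hca : Real.cos (angle x y) = a := by rw [cos_angle, hx, hy]; simp [ha]
  have hcb : Real.cos (angle y z) = b := by rw [cos_angle, hy, hz]; simp [hb]
  have hcc : Real.cos (angle x z) = c := by rw [cos_angle, hx, hz]; simp [hc]
  have hxx : ⟪x, x⟫ = (1:ℝ) := by rw [real_inner_self_eq_norm_mul_norm, hx]; norm_num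
  have hyy : ⟪y, y⟫ = (1:ℝ) := by rw [real_inner_self_eq_norm_mul_norm, hy]; norm_num
  have hzz : ⟪z, z⟫ = (1:ℝ) := by rw [real_inner_self_eq_norm_mul_norm, hz]; norm_num
  have hsa : Real.sin (angle x y) = Real.sqrt (1 - a * a) := by
    have := sin_angle_mul_norm_mul_norm x y
    rw [hx, hy, hxx, hyy] at this
    simpa using this
  have hsb : Real.sin (angle y z) = Real.sqrt (1 - b * b) := by
    have := sin_angle_mul_norm_mul_norm y z
    rw [hy, hz, hyy, hzz] at this
    simpa using this
  -- key inequality via orthogonal decomposition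
  set p : V := x - a • y with hp
  set q : V := z - b • y with hq
  have hpq : ⟪p, q⟫ = c - a * b := by
    simp only [hp, hq, inner_sub_left, inner_sub_right, real_inner_smul_left,
      real_inner_smul_right, hyy]
    simp only [ha, hb, hc, real_inner_comm y x, real_inner_comm z y]
    ring
  have hpp : ⟪p, p⟫ = 1 - a * a := by
    simp only [hp, inner_sub_left, inner_sub_right, real_inner_smul_left,
      real_inner_smul_right, hyy, hxx]
    simp only [ha, real_inner_comm y x]
    ring
  have hqq : ⟪q, q⟫ = 1 - b * b := by
    simp only [hq, inner_sub_left, inner_sub_right, real_inner_smul_left,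
      real_inner_smul_right, hyy, hzz]
    simp only [hb, real_inner_comm z y]
    ring
  have hnp : ‖p‖ = Real.sqrt (1 - a * a) := by
    rw [← Real.sqrt_sq (norm_nonneg p), sq, ← real_inner_self_eq_norm_mul_norm, hpp]
  have hnq : ‖q‖ = Real.sqrt (1 - b * b) := by
    rw [← Real.sqrt_sq (norm_nonneg q), sq, ← real_inner_self_eq_norm_mul_norm, hqq]
  have hcs : -(Real.sqrt (1 - a * a) * Real.sqrt (1 - b * b)) ≤ c - a * b := by
    rw [← hpq, ← hnp, ← hnq]
    exact neg_le_of_neg_le (by linarith [abs_le.mp (abs_real_inner_le_norm p q)])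
  have hcos : Real.cos (angle x y + angle y z) ≤ Real.cos (angle x z) := by
    rw [Real.cos_add, hca, hcb, hsa, hsb, hcc]
    linarith
  by_contra hlt
  push_neg at hlt
  have := Real.strictAntiOn_cos ⟨add_nonneg (angle_nonneg _ _) (angle_nonneg _ _), le_of_lt hsum⟩
    ⟨angle_nonneg x z, angle_le_pi x z⟩ hlt
  linarith [angle_nonneg x y, angle_nonneg y z]

theorem angle_triangle' (x y z : V) : angle x z ≤ angle x y + angle y z := by
  rcases eq_or_ne x 0 with rfl | hx
  · simpa using angle_nonneg y z
  rcases eq_or_ne y 0 with rfl | hy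
  · simp only [angle_zero_right, angle_zero_left]
    linarith [angle_le_pi x z]
  rcases eq_or_ne z 0 with rfl | hz
  · simp only [angle_zero_right]
    linarith [angle_nonneg x y]
  have hx' : (0:ℝ) < ‖x‖⁻¹ := inv_pos.mpr (norm_pos_iff.mpr hx)
  have hy' : (0:ℝ) < ‖y‖⁻¹ := inv_pos.mpr (norm_pos_iff.mpr hy)
  have hz' : (0:ℝ) < ‖z‖⁻¹ := inv_pos.mpr (norm_pos_iff.mpr hz)
  have hn : ∀ w : V, w ≠ 0 → ‖‖w‖⁻¹ • w‖ = 1 := by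
    intro w hw
    rw [norm_smul, norm_inv, norm_norm, inv_mul_cancel₀ (norm_ne_zero_iff.mpr hw)]
  have h := angle_triangle_unit (hn x hx) (hn y hy) (hn z hz)
  rwa [angle_smul_left_of_pos _ _ hx', angle_smul_right_of_pos _ _ hz',
    angle_smul_left_of_pos _ _ hx', angle_smul_right_of_pos _ _ hy',
    angle_smul_left_of_pos _ _ hy', angle_smul_right_of_pos _ _ hz'] at h

theorem angle_split {u v : V} (hu : u ≠ 0) (huv : u + v ≠ 0) :
    angle u (u + v) + angle (u + v) v = angle u v := by
  have h := angle_add_angle_sub_add_angle_sub_eq_pi u huv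
  have h1 : u - (u + v) = -v := by abel
  have h2 : u + v - u = v := by abel
  rw [h1, h2, angle_neg_right] at h
  linarith






noncomputable def pangles : List V → ℝ
  | [] => 0
  | [_] => 0
  | x :: y :: t => angle x y + pangles (y :: t)

noncomputable def cangles : List V → ℝ
  | [] => 0
  | a :: t => pangles ((a :: t) ++ [a])

theorem pangles_concat2 (m : List V) (p q : V) :
    pangles (m ++ [p, q]) = pangles (m ++ [p]) + angle p q := by
  induction m with
  | nil => simp [pangles]
  | cons z m' ih =>
    cases m' with
    | nil => simp [pangles]
    | cons w m'' =>
      simp only [List.cons_append, List.append_eq, pangles] at ih ⊢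
      linarith

theorem cangles_rot (x : V) (s : List V) : cangles (x :: s) = cangles (s ++ [x]) := by
  cases s with
  | nil => rfl
  | cons y t =>
    have lhs : cangles (x :: y :: t) = angle x y + pangles (y :: (t ++ [x])) := by
      show pangles (x :: y :: (t ++ [x])) = _
      simp [pangles]
    have rhs : cangles ((y :: t) ++ [x]) = pangles (y :: (t ++ [x])) + angle x y := by
      show pangles ((y :: (t ++ [x])) ++ [y]) = _
      have h2 : (y :: (t ++ [x])) ++ [y] = (y :: t) ++ [x, y] := by simp
      rw [h2, pangles_concat2]
      have h3 : (y :: t) ++ [x] = y :: (t ++ [x]) := by simp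
      rw [h3]
    rw [lhs, rhs]
    ring

theorem cangles_comm (s r : List V) : cangles (s ++ r) = cangles (r ++ s) := by
  induction s generalizing r with
  | nil => simp
  | cons x s' ih =>
    calc cangles ((x :: s') ++ r) = cangles (x :: (s' ++ r)) := rfl
      _ = cangles ((s' ++ r) ++ [x]) := cangles_rot _ _
      _ = cangles (s' ++ (r ++ [x])) := by rw [List.append_assoc]
      _ = cangles ((r ++ [x]) ++ s') := ih _
      _ = cangles (r ++ (x :: s')) := by rw [List.append_assoc]; rfl

theorem cangles_merge (a u v c : V) (t : List V) (hu : u ≠ 0) (hv : v ≠ 0)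
    (huv : u + v ≠ 0) :
    cangles (a :: (u + v) :: c :: t) ≤ cangles (a :: u :: v :: c :: t) := by
  have e1 : cangles (a :: u :: v :: c :: t)
      = angle a u + (angle u v + (angle v c + pangles (c :: (t ++ [a])))) := by
    show pangles (a :: u :: v :: c :: (t ++ [a])) = _
    simp only [pangles]
  have e2 : cangles (a :: (u + v) :: c :: t)
      = angle a (u + v) + (angle (u + v) c + pangles (c :: (t ++ [a]))) := by
    show pangles (a :: (u + v) :: c :: (t ++ [a])) = _
    simp only [pangles]
  have t1 : angle a (u + v) ≤ angle a u + angle u (u + v) := angle_triangle' a u (u + v)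
  have t2 : angle (u + v) c ≤ angle (u + v) v + angle v c := angle_triangle' (u + v) v c
  have sp := angle_split hu huv
  linarith

theorem cangles_tri {u v w : V} (hu : u ≠ 0) (hv : v ≠ 0) (huv : u + v ≠ 0)
    (hw : w = -(u + v)) : cangles [u, v, w] = 2 * π := by
  have e : cangles [u, v, w] = angle u v + (angle v w + (angle w u + 0)) := by
    show pangles [u, v, w, u] = _
    simp only [pangles]
  subst hw
  rw [angle_neg_right, angle_neg_left] at e
  have sp := angle_split hu huv
  rw [angle_comm (u + v) v] at sp
  rw [angle_comm (u + v) u] at e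
  linarith [e, sp]






def Par (x y : V) : Prop := ∃ r : ℝ, y = r • x

theorem par_refl (x : V) : Par x x := ⟨1, (one_smul ℝ x).symm⟩

theorem par_symm {x y : V} (hy : y ≠ 0) (h : Par x y) : Par y x := by
  obtain ⟨r, rfl⟩ := h
  have hr : r ≠ 0 := by rintro rfl; simp at hy
  exact ⟨r⁻¹, by rw [smul_smul, inv_mul_cancel₀ hr, one_smul]⟩

theorem par_trans {x y z : V} (h1 : Par x y) (h2 : Par y z) : Par x z := by
  obtain ⟨r, rfl⟩ := h1
  obtain ⟨s, rfl⟩ := h2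
  exact ⟨s * r, smul_smul s r x⟩

theorem chain_par : ∀ (l : List V) (a : V), (∀ z ∈ l, z ≠ 0) →
    (∀ (l1 : List V) (u v : V) (l2 : List V), a :: l = l1 ++ u :: v :: l2 → Par u v) →
    ∀ z ∈ l, Par a z := by
  intro l
  induction l with
  | nil => intro a _ _ z hz; simp at hz
  | cons b t ih =>
    intro a hnz H z hz
    have hab : Par a b := H [] a b t rfl
    rcases List.mem_cons.mp hz with rfl | hz'
    · exact hab
    · have hbz := ih b (fun w hw => hnz w (List.mem_cons_of_mem _ hw))
        (fun l1 u v l2 h => H (a :: l1) u v l2 (by rw [List.cons_append, h])) z hz'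
      exact par_trans hab hbz

theorem key : ∀ (N : ℕ) (l : List V), l.length = N → (∀ z ∈ l, z ≠ 0) → l.sum = 0 →
    (∃ x ∈ l, ∃ y ∈ l, ¬ Par x y) → 2 * π ≤ cangles l := by
  intro N
  induction N using Nat.strong_induction_on with
  | _ N ih =>
  intro l hlen hnz hsum hnp
  by_cases hadj : ∀ (l1 : List V) (u v : V) (l2 : List V), l = l1 ++ u :: v :: l2 → Par u v
  · exfalso
    obtain ⟨x, hx, y, hy, hxy⟩ := hnp
    cases l with
    | nil => simp at hx
    | cons a t =>
      have hall := chain_par t a (fun w hw => hnz w (List.mem_cons_of_mem _ hw)) hadj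
      have hax : Par a x := by
        rcases List.mem_cons.mp hx with rfl | hx'
        · exact par_refl _
        · exact hall x hx'
      have hay : Par a y := by
        rcases List.mem_cons.mp hy with rfl | hy'
        · exact par_refl _
        · exact hall y hy'
      exact hxy (par_trans (par_symm (hnz x hx) hax) hay)
  push_neg at hadj
  obtain ⟨l1, u, v, l2, heq, hnpar⟩ := hadj
  have hu : u ≠ 0 := hnz u (by rw [heq]; simp)
  have hv : v ≠ 0 := hnz v (by rw [heq]; simp)
  have huv : u + v ≠ 0 := by
    intro h
    exact hnpar ⟨-1, by rw [neg_smul, one_smul]; exact eq_neg_of_add_eq_zero_right h⟩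
  -- cyclic rearrangement
  have hmemt : ∀ z ∈ l2 ++ l1, z ∈ l := by
    intro z hz
    rw [heq]
    rcases List.mem_append.mp hz with h | h
    · exact List.mem_append.mpr (Or.inr (by simp [h]))
    · exact List.mem_append.mpr (Or.inl h)
  have hcl : cangles l = cangles (u :: v :: (l2 ++ l1)) := by
    rw [heq, cangles_comm]
    rfl
  have hsum' : u + v + (l2 ++ l1).sum = 0 := by
    rw [heq] at hsum
    simp only [List.sum_append, List.sum_cons] at hsum ⊢
    rw [← hsum]; abel
  rcases (l2 ++ l1).eq_nil_or_concat with ht | ⟨t', aa, hta⟩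
  · rw [ht] at hsum'; simp at hsum'; exact absurd hsum' huv
  rw [List.concat_eq_append] at hta
  cases t' with
  | nil =>
    -- triangle case : cycle is u, v, aa
    simp only [List.nil_append] at hta
    have haa : aa = -(u + v) := by
      rw [hta] at hsum'
      simp only [List.sum_cons, List.sum_nil, add_zero] at hsum'
      exact eq_neg_of_add_eq_zero_right hsum'
    have : cangles l = 2 * π := by
      rw [hcl, hta]
      exact cangles_tri hu hv huv haa
    linarith [this]
  | cons c t3 =>
    -- main inductive step
    have hsl : (l2 ++ l1).sum = c + (t3.sum + aa) := by
      rw [hta]; simp [List.sum_append]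
    have hc : c ≠ 0 := hnz c (hmemt c (by rw [hta]; simp))
    have haa0 : aa ≠ 0 := hnz aa (hmemt aa (by rw [hta]; simp))
    have hmem2 : ∀ z ∈ t3 ++ [aa], z ∈ l := by
      intro z hz
      exact hmemt z (by rw [hta]; exact List.mem_cons_of_mem _ hz)
    -- lengths
    have e1 := congrArg List.length heq
    have e2 := congrArg List.length hta
    simp only [List.length_append, List.length_cons, List.length_nil] at e1 e2
    -- cyclic forms
    have hclr : cangles l = cangles (u :: v :: c :: (t3 ++ [aa])) := by
      rw [hcl, hta]; rfl
    have hrot : cangles (aa :: u :: v :: c :: t3)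
        = cangles (u :: v :: c :: (t3 ++ [aa])) := by
      have := cangles_rot aa (u :: v :: c :: t3)
      rw [this]; rfl
    -- not-parallel facts
    have hPu : ∀ r : ℝ, u ≠ r • (u + v) := by
      intro r h
      rcases eq_or_ne r 0 with rfl | hr0
      · rw [zero_smul] at h; exact hu h
      rw [smul_add] at h
      have h3 : u - r • u = r • v := sub_eq_of_eq_add' h
      have h2 : r • v = (1 - r) • u := by rw [← h3, sub_smul, one_smul]
      apply hnpar
      refine ⟨r⁻¹ * (1 - r), ?_⟩
      rw [mul_smul, ← h2, smul_smul, inv_mul_cancel₀ hr0, one_smul]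
    have hPv : ∀ r : ℝ, v ≠ r • (u + v) := by
      intro r h
      rcases eq_or_ne r 0 with rfl | hr0
      · rw [zero_smul] at h; exact hv h
      rw [smul_add] at h
      have h3 : v - r • v = r • u := sub_eq_of_eq_add h
      have h2 : (1 - r) • v = r • u := by rw [sub_smul, one_smul]; exact h3
      rcases eq_or_ne r 1 with rfl | hr1
      · rw [sub_self, zero_smul, one_smul] at h2
        exact hu h2.symm
      have h1r : (1 - r) ≠ 0 := sub_ne_zero.mpr (Ne.symm hr1)
      apply hnpar
      refine ⟨(1 - r)⁻¹ * r, ?_⟩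
      rw [mul_smul, ← h2, smul_smul, inv_mul_cancel₀ h1r, one_smul]
    by_cases hNP : ∃ x ∈ (aa :: (u + v) :: c :: t3), ∃ y ∈ (aa :: (u + v) :: c :: t3), ¬ Par x y
    · -- first merge works
      have hlenm : (aa :: (u + v) :: c :: t3).length = N - 1 := by
        simp only [List.length_cons]; omega
      have hnzm : ∀ z ∈ (aa :: (u + v) :: c :: t3), z ≠ 0 := by
        intro z hz
        rcases List.mem_cons.mp hz with rfl | hz
        · exact haa0
        rcases List.mem_cons.mp hz with rfl | hz
        · exact huv
        rcases List.mem_cons.mp hz with rfl | hz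
        · exact hc
        · exact hnz z (hmem2 z (List.mem_append_left _ hz))
      have hsumm : (aa :: (u + v) :: c :: t3).sum = 0 := by
        simp only [List.sum_cons]
        calc aa + (u + v + (c + t3.sum)) = u + v + (c + (t3.sum + aa)) := by abel
          _ = u + v + (l2 ++ l1).sum := by rw [hsl]
          _ = 0 := hsum'
      have h1 := ih (N - 1) (by omega) _ hlenm hnzm hsumm hNP
      have h2 := cangles_merge aa u v c t3 hu hv huv
      rw [hrot, ← hclr] at h2
      linarith
    · -- all of merged list parallel to u + v; merge (v, c) instead
      push_neg at hNP
      have hd : ∀ y ∈ (aa :: (u + v) :: c :: t3), ∃ r : ℝ, y = r • (u + v) :=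
        fun y hy => hNP (u + v) (by simp) y hy
      obtain ⟨rc, hrc⟩ := hd c (by simp)
      obtain ⟨ra, hra⟩ := hd aa (by simp)
      have hvc : v + c ≠ 0 := by
        intro h
        have : v = (-rc) • (u + v) := by
          rw [neg_smul, ← hrc]
          exact eq_neg_of_add_eq_zero_left h
        exact hPv (-rc) this
      obtain ⟨e, s, hes⟩ := List.exists_cons_of_ne_nil
        (show t3 ++ [aa] ≠ [] by simp)
      have e3 := congrArg List.length hes
      simp only [List.length_append, List.length_cons, List.length_nil] at e3
      have hlenm2 : (u :: (v + c) :: e :: s).length = N - 1 := by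
        simp only [List.length_cons]; omega
      have hnzm2 : ∀ z ∈ (u :: (v + c) :: e :: s), z ≠ 0 := by
        intro z hz
        rcases List.mem_cons.mp hz with rfl | hz
        · exact hu
        rcases List.mem_cons.mp hz with rfl | hz
        · exact hvc
        · exact hnz z (hmem2 z (by rw [hes]; exact hz))
      have hsum_es : e + s.sum = t3.sum + aa := by
        have h := congrArg List.sum hes
        simp only [List.sum_append, List.sum_cons, List.sum_nil, add_zero] at h
        exact h.symm
      have hsumm2 : (u :: (v + c) :: e :: s).sum = 0 := by
        simp only [List.sum_cons]
        calc u + (v + c + (e + s.sum)) = u + (v + c + (t3.sum + aa)) := by rw [hsum_es]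
          _ = u + v + (c + (t3.sum + aa)) := by abel
          _ = u + v + (l2 ++ l1).sum := by rw [hsl]
          _ = 0 := hsum'
      have hNP2 : ∃ x ∈ (u :: (v + c) :: e :: s), ∃ y ∈ (u :: (v + c) :: e :: s), ¬ Par x y := by
        refine ⟨u, by simp, aa, ?_, ?_⟩
        · have : aa ∈ e :: s := by rw [← hes]; simp
          simp [this]
        · rintro ⟨r, hr⟩
          have hr0 : r ≠ 0 := by rintro rfl; rw [zero_smul] at hr; exact haa0 hr
          apply hPu (r⁻¹ * ra)
          rw [mul_smul, ← hra, hr, smul_smul, inv_mul_cancel₀ hr0, one_smul]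
      have h1 := ih (N - 1) (by omega) _ hlenm2 hnzm2 hsumm2 hNP2
      have h2 := cangles_merge u v c e s hv hc hvc
      have hre : cangles (u :: v :: c :: (e :: s)) = cangles l := by
        rw [← hes, ← hclr]
      rw [hre] at h2
      linarith


theorem list_sum_map_range {W : Type*} [AddCommMonoid W] (f : ℕ → W) (k : ℕ) :
    ((List.range k).map f).sum = ∑ m ∈ Finset.range k, f m := by
  induction k with
  | zero => simp
  | succ k ih => rw [List.range_succ, Finset.sum_range_succ, ← ih]; simp

theorem pangles_range (f : ℕ → V) (k : ℕ) :
    pangles ((List.range (k + 1)).map f) = ∑ m ∈ Finset.range k, angle (f m) (f (m + 1)) := by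
  induction k with
  | zero => simp [pangles]
  | succ k ih =>
    have h1 : List.range (k + 2) = List.range k ++ [k, k + 1] := by
      rw [List.range_succ, List.range_succ, List.append_assoc]
      rfl
    have h2 : List.range (k + 1) = List.range k ++ [k] := by rw [List.range_succ]
    rw [h1, List.map_append]
    simp only [List.map_cons, List.map_nil]
    rw [pangles_concat2, Finset.sum_range_succ, ← ih, h2, List.map_append]
    simp

theorem cangles_eq_pangles {l : List V} {a : V} (h : l.head? = some a) :
    cangles l = pangles (l ++ [a]) := by
  cases l with
  | nil => simp at h
  | cons b t =>
    simp only [List.head?_cons, Option.some.injEq] at h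
    rw [← h]
    rfl


end Fenchel


open Fenchel

theorem stmt_7 (n : ℕ) (P : ℕ → EuclideanSpace ℝ (Fin 3))
    (hper : ∀ m, P (m + (n + 1)) = P m)
    (hdist : ∀ m, P m ≠ P (m + 1))
    (hnondeg : ¬ Collinear ℝ (Set.range P)) :
    (2 : ℝ) * Real.pi ≤
      ∑ m ∈ Finset.range (n + 1),
        angle (P (m + 1) - P m) (P (m + 2) - P (m + 1)) := by
  set f : ℕ → EuclideanSpace ℝ (Fin 3) := fun m => P (m + 1) - P m with hf
  have hfper : ∀ m, f (m + (n + 1)) = f m := by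
    intro m
    simp only [hf]
    have h1 : m + (n + 1) + 1 = (m + 1) + (n + 1) := by ring
    rw [h1, hper (m + 1), hper m]
  have hfnz : ∀ m, f m ≠ 0 := by
    intro m h
    simp only [hf] at h
    exact hdist m (sub_eq_zero.mp h).symm
  have hP0 : P (n + 1) = P 0 := by have := hper 0; rwa [zero_add] at this
  have hf0 : f (n + 1) = f 0 := by have := hfper 0; rwa [zero_add] at this
  set l : List (EuclideanSpace ℝ (Fin 3)) := (List.range (n + 1)).map f with hl
  have hlen : l.length = n + 1 := by simp [hl]
  have hnz : ∀ z ∈ l, z ≠ 0 := by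
    intro z hz
    rw [hl] at hz
    obtain ⟨m, _, rfl⟩ := List.mem_map.mp hz
    exact hfnz m
  have hsum : l.sum = 0 := by
    rw [hl, list_sum_map_range]
    simp only [hf]
    rw [Finset.sum_range_sub P (n + 1), hP0, sub_self]
  have hNP : ∃ x ∈ l, ∃ y ∈ l, ¬ Par x y := by
    by_contra hcon
    push_neg at hcon
    apply hnondeg
    have hmem : ∀ m, m < n + 1 → f m ∈ l := by
      intro m hm
      rw [hl]
      exact List.mem_map_of_mem (f := f) (List.mem_range.mpr hm)
    have hpar : ∀ m, ∃ r : ℝ, f m = r • f 0 := by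
      intro m
      induction m using Nat.strong_induction_on with
      | _ m ih =>
        by_cases hm : m < n + 1
        · exact hcon (f 0) (hmem 0 (Nat.succ_pos n)) (f m) (hmem m hm)
        · push_neg at hm
          have h1 : m - (n + 1) + (n + 1) = m := Nat.sub_add_cancel hm
          have h2 := hfper (m - (n + 1))
          rw [h1] at h2
          rw [h2]
          exact ih (m - (n + 1)) (by omega)
    have hpt : ∀ k, ∃ r : ℝ, P k = r • f 0 + P 0 := by
      intro k
      induction k with
      | zero => exact ⟨0, by simp⟩
      | succ k ihk =>
        obtain ⟨r, hr⟩ := ihk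
        obtain ⟨s, hs⟩ := hpar k
        refine ⟨r + s, ?_⟩
        have hstep : P (k + 1) = f k + P k := by simp [hf]
        rw [hstep, hs, hr, add_smul]
        abel
    rw [collinear_iff_of_mem (Set.mem_range_self 0)]
    refine ⟨f 0, ?_⟩
    rintro p ⟨k, rfl⟩
    obtain ⟨r, hr⟩ := hpt k
    exact ⟨r, hr⟩
  have hkey := key (n + 1) l hlen hnz hsum hNP
  have hhead : l.head? = some (f 0) := by
    rw [hl, List.range_succ_eq_map]
    simp
  have happ : l ++ [f 0] = (List.range (n + 2)).map f := by
    rw [hl, List.range_succ (n := n + 1), List.map_append, ← hf0]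
    rfl
  have hcan : cangles l = ∑ m ∈ Finset.range (n + 1), angle (f m) (f (m + 1)) := by
    rw [cangles_eq_pangles hhead, happ, pangles_range f (n + 1)]
  have hgoal : ∑ m ∈ Finset.range (n + 1), angle (f m) (f (m + 1))
      = ∑ m ∈ Finset.range (n + 1),
        angle (P (m + 1) - P m) (P (m + 2) - P (m + 1)) := by
    refine Finset.sum_congr rfl fun m _ => ?_
    simp only [hf]
  rw [← hgoal]
  rw [hcan] at hkey
  exact hkey
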